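/- arXiv:2106.15165 — 8 statements merged into one kernel-verified Lean document; each statement's English description precedes it below -/
import Mathlib

section
/- Let (g, ω) be a symplectic Lie algebra with associated left-symmetric product ·. Then · is Novikov (i.e., (x·y)·z = (x·z)·y for all x, y, z) if and only if · is associative. -/
/-- The left-symmetric product associated with a symplectic Lie algebra
`(g, ω)` is Novikov iff it is associative. -/
theorem snla_stmt_3 (g : Type*) [LieRing g] [LieAlgebra ℝ g]
    (ω : g →ₗ[ℝ] g →ₗ[ℝ] ℝ)
    (hskew : ∀ x y : g, ω x y = - ω y x)
    (hnondeg : ∀ x : g, (∀ y : g, ω x y = 0) → x = 0)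
    (hcocycle : ∀ x y z : g, ω ⁅x, y⁆ z + ω ⁅y, z⁆ x + ω ⁅z, x⁆ y = 0)
    (mul : g →ₗ[ℝ] g →ₗ[ℝ] g)
    (hdef : ∀ x y z : g, ω (mul x y) z = - ω y ⁅x, z⁆) :
    (∀ x y z : g, mul (mul x y) z = mul (mul x z) y) ↔
      (∀ x y z : g, mul (mul x y) z = mul x (mul y z)) := by
  -- ω of a negated first argument
  have hneg1 : ∀ x y : g, ω (-x) y = -ω x y := by
    intro x y; rw [map_neg]; rfl
  -- reversed bracket in the first slot
  have hrev1 : ∀ x y z : g, ω ⁅y, x⁆ z = -ω ⁅x, y⁆ z := by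
    intro x y z
    have h3 : (⁅y, x⁆ : g) = -⁅x, y⁆ := by rw [lie_skew]
    rw [h3, hneg1]
  -- reversed bracket in the second slot
  have hrev2 : ∀ x y z : g, ω z ⁅y, x⁆ = -ω z ⁅x, y⁆ := by
    intro x y z
    have h3 : (⁅y, x⁆ : g) = -⁅x, y⁆ := by rw [lie_skew]
    rw [h3, map_neg]
  -- reversed inner bracket
  have hrevin : ∀ u v p q : g, ω u ⁅v, ⁅q, p⁆⁆ = -ω u ⁅v, ⁅p, q⁆⁆ := by
    intro u v p q
    have h3 : (⁅v, ⁅q, p⁆⁆ : g) = -⁅v, ⁅p, q⁆⁆ := by rw [← lie_neg, lie_skew]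
    rw [h3, map_neg]
  -- basic cocycle reformulation
  have hb : ∀ x y z : g, ω ⁅x, y⁆ z = ω x ⁅y, z⁆ - ω y ⁅x, z⁆ := by
    intro x y z
    have hc := hcocycle x y z
    have e1 : ω ⁅y, z⁆ x = -ω x ⁅y, z⁆ := hskew _ _
    have e2 : ω ⁅z, x⁆ y = ω y ⁅x, z⁆ := by
      rw [hrev1 x z y, hskew ⁅x, z⁆ y]; ring
    linarith
  -- second-slot reduction
  have h2 : ∀ c u v : g, ω c (mul u v) = ω v ⁅u, c⁆ := by
    intro c u v
    rw [hskew c (mul u v), hdef u v c]; ring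
  -- commutator identity: ⁅x,y⁆ = x·y - y·x
  have hcomm : ∀ x y : g, ⁅x, y⁆ = mul x y - mul y x := by
    intro x y
    have h0 : mul x y - mul y x - ⁅x, y⁆ = 0 := by
      apply hnondeg
      intro z
      have e1 := hdef x y z
      have e2 := hdef y x z
      have e3 := hb x y z
      simp only [map_sub, LinearMap.sub_apply]
      linarith
    exact (sub_eq_zero.mp h0).symm
  -- relation (R)
  have hR : ∀ a b c d : g,
      ω d ⁅mul a b, c⁆ + ω a ⁅mul c d, b⁆ = -ω d ⁅c, ⁅a, b⁆⁆ := by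
    intro a b c d
    have e0 : ω (mul a b) (mul c d) = -ω b ⁅a, mul c d⁆ := hdef a b (mul c d)
    have e1 : (⁅a, mul c d⁆ : g) = mul a (mul c d) - mul (mul c d) a :=
      hcomm a (mul c d)
    have e2 : ω b (mul a (mul c d)) = ω (mul c d) ⁅a, b⁆ := h2 b a (mul c d)
    have e3 : ω (mul c d) ⁅a, b⁆ = -ω d ⁅c, ⁅a, b⁆⁆ := hdef c d ⁅a, b⁆
    have e4 : ω b (mul (mul c d) a) = ω a ⁅mul c d, b⁆ := h2 b (mul c d) a
    have wA : ω (mul a b) (mul c d) = ω d ⁅c, ⁅a, b⁆⁆ + ω a ⁅mul c d, b⁆ := by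
      rw [e0, e1, map_sub, e2, e3, e4]; ring
    have wB : ω (mul a b) (mul c d) = -ω d ⁅mul a b, c⁆ := by
      rw [h2 (mul a b) c d, hrev2 (mul a b) c d]
    linarith
  -- ω applied to the Jacobi identity
  have hJ : ∀ b a c d : g,
      ω b ⁅a, ⁅c, d⁆⁆ + ω b ⁅c, ⁅d, a⁆⁆ + ω b ⁅d, ⁅a, c⁆⁆ = 0 := by
    intro b a c d
    have j := lie_jacobi a c d
    have := congrArg (fun m => ω b m) j
    simpa using this
  -- relation (L)
  have hL : ∀ x y z w : g,
      ω z ⁅mul x y, w⁆ - ω z ⁅mul y x, w⁆ = ω z ⁅⁅x, y⁆, w⁆ := by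
    intro x y z w
    have e : (⁅⁅x, y⁆, w⁆ : g) = ⁅mul x y, w⁆ - ⁅mul y x, w⁆ := by
      rw [hcomm x y, sub_lie]
    rw [e, map_sub]
  constructor
  · -- Novikov → associative
    intro hN x y z
    have hPN : ∀ x y z w : g, ω z ⁅mul x y, w⁆ = ω y ⁅mul x z, w⁆ := by
      intro x y z w
      have h' : ω (mul (mul x y) z) w = ω (mul (mul x z) y) w := by
        rw [hN x y z]
      rw [hdef (mul x y) z w, hdef (mul x z) y w] at h'
      linarith
    -- formula for P under the Novikov hypothesis
    have hPf : ∀ a b c d : g, ω c ⁅mul a b, d⁆ = ω b ⁅c, ⁅d, a⁆⁆ := by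
      intro a b c d
      have r1 := hR c d a b
      have n1 := hPN c d b a
      have r2 := hR d a c b
      have n2 := hPN d a b c
      have r3 := hR a c d b
      have n3 := hPN a c b d
      have j := hJ b a c d
      linarith
    -- the key vanishing: ω on brackets
    have hS1 : ∀ a b c d : g, ω ⁅a, b⁆ ⁅c, d⁆ = ω ⁅d, b⁆ ⁅c, a⁆ := by
      intro a b c d
      have l := hL d a b c
      have p1 := hPf d a b c
      have p2 := hPf a d b c
      have hb1 := hb a b ⁅c, d⁆
      have hb2 := hb d b ⁅c, a⁆
      have jd : (⁅⁅d, a⁆, c⁆ : g) = ⁅a, ⁅c, d⁆⁆ - ⁅d, ⁅c, a⁆⁆ := by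
        have n1 : (⁅a, ⁅c, d⁆⁆ : g) = -⁅a, ⁅d, c⁆⁆ := by rw [← lie_neg, lie_skew]
        have n2 : (⁅d, ⁅c, a⁆⁆ : g) = -⁅d, ⁅a, c⁆⁆ := by rw [← lie_neg, lie_skew]
        have h := leibniz_lie d a c
        rw [n1, n2, h]; abel
      have jd' : ω b ⁅⁅d, a⁆, c⁆ = ω b ⁅a, ⁅c, d⁆⁆ - ω b ⁅d, ⁅c, a⁆⁆ := by
        rw [jd, map_sub]
      linarith
    have hG0 : ∀ a b c d : g, ω ⁅a, b⁆ ⁅c, d⁆ = 0 := by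
      intro a b c d
      have t1 : ω ⁅a, b⁆ ⁅c, d⁆ = -ω ⁅c, d⁆ ⁅a, b⁆ := hskew _ _
      have t2 := hS1 c d a b
      have t3 : ω ⁅b, d⁆ ⁅a, c⁆ = -ω ⁅a, c⁆ ⁅b, d⁆ := hskew _ _
      have t4 := hS1 a c b d
      have t5 := hrev1 c d ⁅b, a⁆
      have t6 := hrev2 a b ⁅c, d⁆
      have t7 : ω ⁅c, d⁆ ⁅a, b⁆ = -ω ⁅a, b⁆ ⁅c, d⁆ := hskew _ _
      linarith
    -- conclude associativity
    have h0 : mul (mul x y) z - mul x (mul y z) = 0 := by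
      apply hnondeg
      intro w
      have e1 := hdef (mul x y) z w
      have e2 := hdef x (mul y z) w
      have e3 := hdef y z ⁅x, w⁆
      have e4 := hPf x y z w
      have e5 := hb y z ⁅w, x⁆
      have e6 := hrevin z y x w
      have e7 := hG0 y z w x
      simp only [map_sub, LinearMap.sub_apply]
      linarith
    exact sub_eq_zero.mp h0
  · -- associative → Novikov
    intro hA x y z
    have hPA : ∀ x y z w : g, ω z ⁅mul x y, w⁆ = -ω z ⁅y, ⁅x, w⁆⁆ := by
      intro x y z w
      have h' : ω (mul (mul x y) z) w = ω (mul x (mul y z)) w := by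
        rw [hA x y z]
      rw [hdef (mul x y) z w, hdef x (mul y z) w] at h'
      have e3 := hdef y z ⁅x, w⁆
      linarith
    have hG0 : ∀ a b c d : g, ω ⁅b, c⁆ ⁅a, d⁆ = 0 := by
      intro a b c d
      have r1 := hR c d a b
      have p1 := hPA a b c d
      have p2 := hPA c d b a
      have hb1 := hb b c ⁅a, d⁆
      have j := hJ b c a d
      have e := hrevin b a c d
      linarith
    have h0 : mul (mul x y) z - mul (mul x z) y = 0 := by
      apply hnondeg
      intro w
      have e1 := hdef (mul x y) z w
      have e2 := hdef (mul x z) y w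
      have p1 := hPA x y z w
      have p2 := hPA x z y w
      have hb1 := hb y z ⁅x, w⁆
      have g1 := hG0 x y z w
      simp only [map_sub, LinearMap.sub_apply]
      linarith
    exact sub_eq_zero.mp h0
end

section
/- Let (g, ·) be an algebra whose product is both Novikov and associative, with commutator bracket [x,y] = x·y - y·x. Then [[x,y],[z,t]] = 0 for all x, y, z, t; hence the induced Lie algebra is two-step solvable. -/
/-- If the product of an algebra is both Novikov and associative, then
`[[x,y],[z,t]] = 0` for the commutator bracket; the induced Lie algebra is
two-step solvable. -/
theorem snla_stmt_6 (g : Type*) [AddCommGroup g] [Module ℝ g]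
    (mul : g →ₗ[ℝ] g →ₗ[ℝ] g)
    (hNov : ∀ x y z : g, mul (mul x y) z = mul (mul x z) y)
    (hassoc : ∀ x y z : g, mul (mul x y) z = mul x (mul y z)) :
    ∀ x y z t : g,
      mul (mul x y - mul y x) (mul z t - mul t z)
        - mul (mul z t - mul t z) (mul x y - mul y x) = 0 := by
  intro x y z t
  have key : ∀ a b c : g, mul a (mul b c - mul c b) = 0 := by
    intro a b c
    have h : mul a (mul b c) = mul a (mul c b) := by
      rw [← hassoc, hNov, hassoc]
    simp [map_sub, h]
  rw [key, key, sub_zero]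
end

section
/- Let (g, ω) be a symplectic Novikov Lie algebra. Then the commutator ideal D(g) = [g,g] is isotropic with respect to ω, i.e., ω([x,y],[z,t]) = 0 for all x, y, z, t in g. -/
/-- In an SNLA `(g, ω)` the commutator ideal `[g,g]` is isotropic:
`ω([x,y],[z,t]) = 0`. -/
theorem snla_stmt_8 (g : Type*) [LieRing g] [LieAlgebra ℝ g]
    (ω : g →ₗ[ℝ] g →ₗ[ℝ] ℝ)
    (hskew : ∀ x y : g, ω x y = - ω y x)
    (hnondeg : ∀ x : g, (∀ y : g, ω x y = 0) → x = 0)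
    (hcocycle : ∀ x y z : g, ω ⁅x, y⁆ z + ω ⁅y, z⁆ x + ω ⁅z, x⁆ y = 0)
    (mul : g →ₗ[ℝ] g →ₗ[ℝ] g)
    (hdef : ∀ x y z : g, ω (mul x y) z = - ω y ⁅x, z⁆)
    (hNov : ∀ x y z : g, mul (mul x y) z = mul (mul x z) y) :
    ∀ x y z t : g, ω ⁅x, y⁆ ⁅z, t⁆ = 0 := by
  -- Step 1: the commutator of the product is the Lie bracket.
  have hcomm : ∀ a b : g, ⁅a, b⁆ = mul a b - mul b a := by
    intro a b
    have h : ⁅a, b⁆ - (mul a b - mul b a) = 0 := by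
      apply hnondeg
      intro w
      have hc := hcocycle a b w
      have h1 : ω ⁅b, w⁆ a = - ω a ⁅b, w⁆ := hskew _ _
      have h2 : ω ⁅w, a⁆ b = ω b ⁅a, w⁆ := by
        rw [hskew]
        have hh : (⁅w, a⁆ : g) = -⁅a, w⁆ := by rw [← lie_skew]
        rw [hh, map_neg, neg_neg]
      have h3 : ω (mul a b) w = - ω b ⁅a, w⁆ := hdef a b w
      have h4 : ω (mul b a) w = - ω a ⁅b, w⁆ := hdef b a w
      have h5 : ω (⁅a, b⁆ - (mul a b - mul b a)) w
          = ω ⁅a, b⁆ w - (ω (mul a b) w - ω (mul b a) w) := by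
        simp [map_sub]
      rw [h5, h3, h4]
      rw [h1, h2] at hc
      linarith
    exact sub_eq_zero.mp h
  -- Step 2: left-symmetry in the form `mul ⁅a,b⁆ c = mul a (mul b c) - mul b (mul a c)`.
  have hbr : ∀ a b c : g, mul ⁅a, b⁆ c = mul a (mul b c) - mul b (mul a c) := by
    intro a b c
    have h : mul ⁅a, b⁆ c - (mul a (mul b c) - mul b (mul a c)) = 0 := by
      apply hnondeg
      intro w
      have h1 : ω (mul ⁅a, b⁆ c) w = - ω c ⁅⁅a, b⁆, w⁆ := hdef _ _ _
      have h2 : ω (mul a (mul b c)) w = ω c ⁅b, ⁅a, w⁆⁆ := by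
        rw [hdef, hdef, neg_neg]
      have h3 : ω (mul b (mul a c)) w = ω c ⁅a, ⁅b, w⁆⁆ := by
        rw [hdef, hdef, neg_neg]
      have hjac : (⁅⁅a, b⁆, w⁆ : g) = ⁅a, ⁅b, w⁆⁆ - ⁅b, ⁅a, w⁆⁆ := by
        rw [lie_lie]
      have h5 : ω (mul ⁅a, b⁆ c - (mul a (mul b c) - mul b (mul a c))) w
          = ω (mul ⁅a, b⁆ c) w - (ω (mul a (mul b c)) w - ω (mul b (mul a c)) w) := by
        simp [map_sub]
      rw [h5, h1, h2, h3, hjac, map_sub]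
      ring
    exact sub_eq_zero.mp h
  -- expansion of `mul a (mul b c)` into a normal form
  have hexp : ∀ a b c : g,
      mul a (mul b c) = mul (mul a b) c - mul (mul b a) c + mul b (mul a c) := by
    intro a b c
    have h := hbr a b c
    rw [hcomm a b, map_sub, LinearMap.sub_apply] at h
    rw [h]
    abel
  -- Step 3: key identity: `mul z ⁅x,y⁆ = mul y ⁅x,z⁆ - mul x ⁅y,z⁆`.
  have hkey : ∀ x y z : g, mul z ⁅x, y⁆ = mul y ⁅x, z⁆ - mul x ⁅y, z⁆ := by
    intro x y z
    rw [hcomm x y, hcomm x z, hcomm y z, map_sub, map_sub, map_sub]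
    rw [hexp z x y, hexp z y x, hexp y x z]
    rw [hNov z x y, hNov x z y, hNov y z x]
    abel
  -- Step 4: the relation among values of ω on brackets.
  have hG : ∀ x y z t : g,
      ω ⁅x, y⁆ ⁅z, t⁆ = ω ⁅x, z⁆ ⁅y, t⁆ - ω ⁅y, z⁆ ⁅x, t⁆ := by
    intro x y z t
    have h1 : ω (mul z ⁅x, y⁆) t = - ω ⁅x, y⁆ ⁅z, t⁆ := hdef _ _ _
    have h2 : ω (mul y ⁅x, z⁆) t = - ω ⁅x, z⁆ ⁅y, t⁆ := hdef _ _ _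
    have h3 : ω (mul x ⁅y, z⁆) t = - ω ⁅y, z⁆ ⁅x, t⁆ := hdef _ _ _
    have h4 : ω (mul z ⁅x, y⁆) t = ω (mul y ⁅x, z⁆) t - ω (mul x ⁅y, z⁆) t := by
      rw [hkey x y z]
      simp [map_sub]
    rw [h1, h2, h3] at h4
    linarith
  -- Step 5: conclude by a symmetry argument.
  intro x y z t
  have e1 := hG x y z t
  have e2 := hG x y t z
  have s1 : ω ⁅x, y⁆ ⁅t, z⁆ = - ω ⁅x, y⁆ ⁅z, t⁆ := by
    have hh : (⁅t, z⁆ : g) = -⁅z, t⁆ := by rw [← lie_skew]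
    rw [hh, map_neg]
  have s2 : ω ⁅y, z⁆ ⁅x, t⁆ = - ω ⁅x, t⁆ ⁅y, z⁆ := hskew _ _
  have s3 : ω ⁅y, t⁆ ⁅x, z⁆ = - ω ⁅x, z⁆ ⁅y, t⁆ := hskew _ _
  rw [s1] at e2
  rw [s2] at e1
  rw [s3] at e2
  linarith
end

section
/- Let (g, ω) be a p-step nilpotent symplectic Novikov Lie algebra of dimension 2n. Then p ≤ dim D(g) + 1 ≤ n + 1, where D(g) = [g,g]. -/
/-- For a `p`-step nilpotent SNLA of dimension `2n`,
`p ≤ dim D(g) + 1 ≤ n + 1`. -/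
theorem snla_stmt_9 (g : Type*) [LieRing g] [LieAlgebra ℝ g]
    [Module.Finite ℝ g] (n p : ℕ)
    (hdim : Module.finrank ℝ g = 2 * n)
    (ω : g →ₗ[ℝ] g →ₗ[ℝ] ℝ)
    (hskew : ∀ x y : g, ω x y = - ω y x)
    (hnondeg : ∀ x : g, (∀ y : g, ω x y = 0) → x = 0)
    (hcocycle : ∀ x y z : g, ω ⁅x, y⁆ z + ω ⁅y, z⁆ x + ω ⁅z, x⁆ y = 0)
    (mul : g →ₗ[ℝ] g →ₗ[ℝ] g)
    (hdef : ∀ x y z : g, ω (mul x y) z = - ω y ⁅x, z⁆)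
    (hNov : ∀ x y z : g, mul (mul x y) z = mul (mul x z) y)
    (hp : 0 < p)
    (hstep : LieModule.lowerCentralSeries ℝ g g p = ⊥)
    (hstep' : LieModule.lowerCentralSeries ℝ g g (p - 1) ≠ ⊥) :
    p ≤ Module.finrank ℝ (LieModule.lowerCentralSeries ℝ g g 1) + 1 ∧
      Module.finrank ℝ (LieModule.lowerCentralSeries ℝ g g 1) + 1 ≤ n + 1 := by
  classical
  -- The bracket is the commutator of the left-symmetric product.
  have hbr : ∀ x y : g, ⁅x, y⁆ = mul x y - mul y x := by
    intro x y
    have h : ∀ t : g, ω (⁅x, y⁆ - (mul x y - mul y x)) t = 0 := by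
      intro t
      have hc := hcocycle x y t
      have e1 : (⁅t, x⁆ : g) = -⁅x, t⁆ := (lie_skew t x).symm
      rw [e1] at hc
      have h1 := hdef x y t
      have h2 := hdef y x t
      have s1 := hskew ⁅y, t⁆ x
      have s2 := hskew ⁅x, t⁆ y
      simp only [map_sub, map_neg, LinearMap.sub_apply, LinearMap.neg_apply] at *
      linarith
    have h0 := hnondeg _ h
    exact (sub_eq_zero.mp h0)
  -- The representation property: `mul ⁅x,y⁆ z = mul x (mul y z) - mul y (mul x z)`.
  have hrep : ∀ x y z : g, mul ⁅x, y⁆ z = mul x (mul y z) - mul y (mul x z) := by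
    intro x y z
    have h : ∀ t : g, ω (mul ⁅x, y⁆ z - (mul x (mul y z) - mul y (mul x z))) t = 0 := by
      intro t
      have h1 := hdef ⁅x, y⁆ z t
      have hj : (⁅⁅x, y⁆, t⁆ : g) = ⁅x, ⁅y, t⁆⁆ - ⁅y, ⁅x, t⁆⁆ := lie_lie x y t
      rw [hj] at h1
      have h2 := hdef x (mul y z) t
      have h3 := hdef y (mul x z) t
      have h4 := hdef y z ⁅x, t⁆
      have h5 := hdef x z ⁅y, t⁆
      simp only [map_sub, LinearMap.sub_apply] at *
      linarith
    exact (sub_eq_zero.mp (hnondeg _ h))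
  -- ω-versions of the identities, with all brackets expanded into products.
  have hdefm : ∀ x y z : g, ω (mul x y) z = -ω y (mul x z) + ω y (mul z x) := by
    intro x y z
    have h := hdef x y z
    rw [hbr x z] at h
    simp only [map_sub] at h
    linarith
  have hcocm : ∀ x y z : g,
      (ω (mul x y) z - ω (mul y x) z) + (ω (mul y z) x - ω (mul z y) x)
        + (ω (mul z x) y - ω (mul x z) y) = 0 := by
    intro x y z
    have h := hcocycle x y z
    rw [hbr x y, hbr y z, hbr z x] at h
    simp only [map_sub, LinearMap.sub_apply] at h
    linarith
  have hnovL : ∀ x y z w : g, ω (mul (mul x y) z) w = ω (mul (mul x z) y) w := by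
    intro x y z w; rw [hNov]
  have hf4L : ∀ x y z w : g,
      ω (mul (mul x y) z) w - ω (mul (mul y x) z) w
        - ω (mul x (mul y z)) w + ω (mul y (mul x z)) w = 0 := by
    intro x y z w
    have h := hrep x y z
    rw [hbr x y] at h
    have h' := congrArg (fun u => ω u w) h
    simp only [map_sub, LinearMap.sub_apply] at h'
    linarith
  -- Isotropy of the commutator ideal.
  have hiso : ∀ a b c d : g, ω ⁅a, b⁆ ⁅c, d⁆ = 0 := by
    intro a b c d
    rw [hbr a b, hbr c d]
    simp only [map_sub, LinearMap.sub_apply]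
    linear_combination
      (-1 : ℝ) * hskew (mul a b) (mul c d)
      + hskew (mul a b) (mul d c)
      + hskew (mul b a) (mul c d)
      - hskew (mul b a) (mul d c)
      - (1/2 : ℝ) * hdefm a c (mul b d)
      + (1/2 : ℝ) * hskew c (mul a (mul b d))
      - (1/2 : ℝ) * hskew c (mul (mul b d) a)
      + (1/2 : ℝ) * hskew (mul a c) (mul b d)
      - (1/2 : ℝ) * hdefm b d (mul a c)
      - (1/2 : ℝ) * hskew d (mul (mul a c) b)
      + (1/2 : ℝ) * hskew d (mul b (mul a c))
      + (1/2 : ℝ) * hdefm a d (mul b c)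
      - (1/2 : ℝ) * hskew d (mul a (mul b c))
      + (1/2 : ℝ) * hskew d (mul (mul b c) a)
      - (1/2 : ℝ) * hskew (mul a d) (mul b c)
      + (1/2 : ℝ) * hdefm b c (mul a d)
      + (1/2 : ℝ) * hskew c (mul (mul a d) b)
      - (1/2 : ℝ) * hskew c (mul b (mul a d))
      - (1/2 : ℝ) * hf4L a b c d
      + hdefm c (mul a b) d
      - hdefm c (mul b a) d
      - (1/2 : ℝ) * hnovL a b c d
      + (1/2 : ℝ) * hf4L a b d c
      + hcocm c d (mul a b)
      - hcocm c d (mul b a)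
      - hdefm d (mul a b) c
      + hdefm d (mul b a) c
      + (1/2 : ℝ) * hnovL a b d c
      + (1/2 : ℝ) * hnovL b a c d
      - (1/2 : ℝ) * hnovL b a d c
  -- The derived ideal as a submodule.
  have h1 : LieModule.lowerCentralSeries ℝ g g 1
      = ⁅(⊤ : LieIdeal ℝ g), (⊤ : LieSubmodule ℝ g g)⁆ := by
    have := LieModule.lowerCentralSeries_succ (R := ℝ) (L := g) (M := g) (k := 0)
    rw [LieModule.lowerCentralSeries_zero] at this
    exact this
  set W : Submodule ℝ g := (LieModule.lowerCentralSeries ℝ g g 1).toSubmodule with hWdef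
  have hWspan : W = Submodule.span ℝ
      {m | ∃ x ∈ (⊤ : LieIdeal ℝ g), ∃ nn ∈ (⊤ : LieSubmodule ℝ g g), ⁅x, nn⁆ = m} := by
    have h2 := LieSubmodule.lieIdeal_oper_eq_linear_span'
      (R := ℝ) (L := g) (M := g) (N := ⊤) (I := ⊤)
    rw [hWdef, h1]
    exact h2
  have hrefl : LinearMap.BilinForm.IsRefl ω := by
    intro x y h
    rw [hskew y x, h, neg_zero]
  -- W is isotropic.
  have hisoW : W ≤ LinearMap.BilinForm.orthogonal ω W := by
    nth_rewrite 1 [hWspan]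
    rw [Submodule.span_le]
    rintro m ⟨x, -, y, -, rfl⟩
    intro u hu
    have hker : W ≤ LinearMap.ker (ω.flip ⁅x, y⁆) := by
      rw [hWspan, Submodule.span_le]
      rintro m' ⟨x', -, y', -, rfl⟩
      simp only [SetLike.mem_coe, LinearMap.mem_ker, LinearMap.flip_apply]
      exact hiso x' y' x y
    simpa only [LinearMap.mem_ker, LinearMap.flip_apply] using hker hu
  have hWn : Module.finrank ℝ W ≤ n := by
    have horth := LinearMap.BilinForm.finrank_orthogonal (B := ω)
      ⟨hnondeg, fun y hy => hnondeg y fun x => by rw [hskew, hy x, neg_zero]⟩ W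
    have hmono : Module.finrank ℝ W ≤ Module.finrank ℝ (LinearMap.BilinForm.orthogonal ω W) :=
      Submodule.finrank_mono hisoW
    have hfin : Module.finrank ℝ W ≤ Module.finrank ℝ g := Submodule.finrank_le W
    omega
  -- Strictly decreasing lower central series.
  have hstrict : ∀ k, k < p →
      LieModule.lowerCentralSeries ℝ g g (k + 1) < LieModule.lowerCentralSeries ℝ g g k := by
    intro k hk
    have hle : LieModule.lowerCentralSeries ℝ g g (k + 1) ≤ LieModule.lowerCentralSeries ℝ g g k :=
      (LieModule.antitone_lowerCentralSeries ℝ g g) (Nat.le_succ k)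
    refine lt_of_le_of_ne hle ?_
    intro heq
    have hstab : ∀ j, LieModule.lowerCentralSeries ℝ g g (k + j)
        = LieModule.lowerCentralSeries ℝ g g k := by
      intro j
      induction j with
      | zero => rfl
      | succ j ih =>
        have e : k + (j + 1) = (k + j) + 1 := by omega
        rw [e, LieModule.lowerCentralSeries_succ, ih, ← LieModule.lowerCentralSeries_succ, heq]
    have e1 : LieModule.lowerCentralSeries ℝ g g (p - 1)
        = LieModule.lowerCentralSeries ℝ g g k := by
      have := hstab (p - 1 - k)
      rwa [show k + (p - 1 - k) = p - 1 by omega] at this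
    have e2 : LieModule.lowerCentralSeries ℝ g g p
        = LieModule.lowerCentralSeries ℝ g g k := by
      have := hstab (p - k)
      rwa [show k + (p - k) = p by omega] at this
    exact hstep' (e1.trans (e2.symm.trans hstep))
    -- chain dimension bound
  have hchain : ∀ i, i ≤ p →
      i ≤ Module.finrank ℝ (LieModule.lowerCentralSeries ℝ g g (p - i)).toSubmodule := by
    intro i
    induction i with
    | zero => intro _; exact Nat.zero_le _
    | succ i ih =>
      intro hip
      have h1 := ih (by omega)
      have hlt := hstrict (p - (i + 1)) (by omega)
      rw [show p - (i + 1) + 1 = p - i by omega] at hlt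
      have hltS : (LieModule.lowerCentralSeries ℝ g g (p - i)).toSubmodule
          < (LieModule.lowerCentralSeries ℝ g g (p - (i + 1))).toSubmodule := by
        refine lt_of_le_of_ne ((LieSubmodule.toSubmodule_le_toSubmodule _ _).mpr hlt.le) ?_
        intro hEq
        exact hlt.ne ((LieSubmodule.toSubmodule_inj _ _).mp hEq)
      have := Submodule.finrank_lt_finrank_of_lt hltS
      omega
  have hfr : Module.finrank ℝ (LieModule.lowerCentralSeries ℝ g g 1) = Module.finrank ℝ W := rfl
  have hfin1 : p - 1 ≤ Module.finrank ℝ W := by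
    have := hchain (p - 1) (by omega)
    rwa [show p - (p - 1) = 1 by omega] at this
  constructor
  · rw [hfr]; omega
  · rw [hfr]; omega
end

section
/- Let (h, ·) be a finite-dimensional left-symmetric algebra. The symplectic cotangent Lie algebra (h* ×_ℓ h, ω) is a symplectic Novikov Lie algebra if and only if (h, ·) is Novikov and associative. -/
open Module

/-- The Lie bracket of the cotangent Lie algebra `h* ×_ℓ h` of a left-symmetric
algebra `(h, mul)`: `[(α,x),(β,y)] = (ℓ_y^t α - ℓ_x^t β, [x,y])`. -/
def cotangentBracket {h : Type*} [AddCommGroup h] [Module ℝ h]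
    (mul : h →ₗ[ℝ] h →ₗ[ℝ] h) :
    (Dual ℝ h × h) → (Dual ℝ h × h) → (Dual ℝ h × h) :=
  fun u v =>
    ((mul v.2).dualMap u.1 - (mul u.2).dualMap v.1, mul u.2 v.2 - mul v.2 u.2)

/-- The symplectic form of the cotangent Lie algebra:
`ω((α,x),(β,y)) = β(x) - α(y)`. -/
def cotangentForm {h : Type*} [AddCommGroup h] [Module ℝ h] :
    (Dual ℝ h × h) → (Dual ℝ h × h) → ℝ :=
  fun u v => v.1 u.2 - u.1 v.2

/-- The symplectic cotangent Lie algebra `(h* ×_ℓ h, ω)` of a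
finite-dimensional left-symmetric algebra `(h, ·)` is an SNLA (i.e. its associated
left-symmetric product `⊙`, characterized by `ω(u ⊙ v, w) = -ω(v, [u, w])`, is
Novikov) iff `(h, ·)` is Novikov and associative. -/
theorem snla_stmt_10 (h : Type*) [AddCommGroup h] [Module ℝ h]
    [FiniteDimensional ℝ h]
    (mul : h →ₗ[ℝ] h →ₗ[ℝ] h)
    (hls : ∀ x y z : h,
      mul (mul x y) z - mul x (mul y z) = mul (mul y x) z - mul y (mul x z))
    (p : (Dual ℝ h × h) → (Dual ℝ h × h) → (Dual ℝ h × h))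
    (hdef : ∀ u v w : Dual ℝ h × h,
      cotangentForm (p u v) w = - cotangentForm v (cotangentBracket mul u w)) :
    (∀ u v w : Dual ℝ h × h, p (p u v) w = p (p u w) v) ↔
      ((∀ x y z : h, mul (mul x y) z = mul (mul x z) y) ∧
        (∀ x y z : h, mul (mul x y) z = mul x (mul y z))) := by
  classical
  -- separation by the dual
  have sep : ∀ a b : h, (∀ φ : Dual ℝ h, φ a = φ b) → a = b := by
    intro a b hab
    have h0 : ∀ φ : Dual ℝ h, φ (a - b) = 0 := by
      intro φ; rw [map_sub, hab φ, sub_self]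
    exact sub_eq_zero.mp ((Module.forall_dual_apply_eq_zero_iff ℝ (a - b)).mp h0)
  -- nondegeneracy of the symplectic form
  have nondeg : ∀ a b : Dual ℝ h × h,
      (∀ w, cotangentForm a w = cotangentForm b w) → a = b := by
    intro a b hab
    have h2 : a.2 = b.2 := by
      apply sep
      intro φ
      have := hab (φ, 0)
      simpa [cotangentForm] using this
    have h1 : a.1 = b.1 := by
      apply LinearMap.ext
      intro z
      have := hab (0, z)
      simpa [cotangentForm] using this
    exact Prod.ext h1 h2
  -- the explicit formula for p
  set q : (Dual ℝ h × h) → (Dual ℝ h × h) → (Dual ℝ h × h) := fun u v =>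
    ((mul.flip v.2).dualMap u.1 + (mul.flip u.2 - mul u.2).dualMap v.1,
      mul u.2 v.2) with hq
  have hpq : ∀ u v, p u v = q u v := by
    intro u v
    apply nondeg
    intro w
    rw [hdef]
    simp only [hq, cotangentForm, cotangentBracket, LinearMap.dualMap_apply,
      LinearMap.flip_apply, LinearMap.sub_apply, LinearMap.add_apply, map_sub]
    ring
  simp only [hpq]
  constructor
  · intro H
    have hA : ∀ x y z : h, mul (mul x y) z = mul (mul x z) y := by
      intro x y z
      have := congrArg Prod.snd (H (0, x) (0, y) (0, z))
      simpa [hq] using this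
    refine ⟨hA, ?_⟩
    -- first, extract condition (B)
    have hB : ∀ x z t : h,
        mul (mul t z) x - mul x (mul t z) = mul t (mul x z) - mul (mul x z) t := by
      intro x z t
      apply sep
      intro φ
      have h1 := congrArg Prod.fst (H (0, x) (φ, (0 : h)) (0, z))
      have h2 := LinearMap.congr_fun h1 t
      simp only [hq, LinearMap.dualMap_apply, LinearMap.flip_apply,
        LinearMap.add_apply, LinearMap.sub_apply, LinearMap.zero_apply,
        map_zero, map_sub, zero_add, add_zero, zero_sub, sub_zero] at h2
      rw [map_sub, map_sub]
      linarith [h2]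
    intro x y z
    -- assoc: combine hA, hB, hls
    have key : (2 : ℝ) • mul (mul x y) z = (2 : ℝ) • mul x (mul y z) := by
      have e1 := hB y z x
      have e2 := hls y x z
      have e3 : mul (mul x z) y = mul (mul x y) z := hA x z y
      have e4 : mul (mul y z) x = mul (mul y x) z := hA y z x
      rw [e3, e4] at e1
      linear_combination (norm := module) e1 - e2
    exact smul_right_injective h two_ne_zero key
  · rintro ⟨hA, hassoc⟩
    have key1 : ∀ t z x : h, mul (mul t z) x = mul t (mul x z) := by
      intro t z x
      rw [hA t z x, hassoc t x z]
    intro u v w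
    simp only [hq]
    refine Prod.ext ?_ ?_
    · apply LinearMap.ext
      intro t
      simp only [LinearMap.dualMap_apply, LinearMap.flip_apply,
        LinearMap.add_apply, LinearMap.sub_apply, map_sub, map_add]
      rw [hA t w.2 v.2, key1 t w.2 u.2, ← key1 u.2 w.2 t, ← key1 t v.2 u.2,
        key1 u.2 v.2 t]
      ring
    · simpa using hA u.2 v.2 w.2
end

section
/- Let (h, ·) be a left-symmetric algebra with left multiplications ℓ, right multiplications r, and adjoint maps ad. The left-symmetric product associated to the symplectic cotangent Lie algebra (h* ×_ℓ h, ω) is given by (α,x) ⊙ (β,y) = (-ad_x^t β + r_y^t α, x·y). -/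
open Module

/-- The left-symmetric product `⊙` associated with the symplectic
cotangent Lie algebra `(h* ×_ℓ h, ω)` of a left-symmetric algebra `(h, ·)` is
given by `(α,x) ⊙ (β,y) = (-ad_x^t β + r_y^t α, x·y)`. -/
theorem snla_stmt_11 (h : Type*) [AddCommGroup h] [Module ℝ h]
    [FiniteDimensional ℝ h]
    (mul : h →ₗ[ℝ] h →ₗ[ℝ] h)
    (hls : ∀ x y z : h,
      mul (mul x y) z - mul x (mul y z) = mul (mul y x) z - mul y (mul x z))
    (p : (Dual ℝ h × h) → (Dual ℝ h × h) → (Dual ℝ h × h))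
    (hdef : ∀ u v w : Dual ℝ h × h,
      cotangentForm (p u v) w = - cotangentForm v (cotangentBracket mul u w)) :
    ∀ (α β : Dual ℝ h) (x y : h),
      p (α, x) (β, y)
        = (-(mul x - mul.flip x).dualMap β + (mul.flip y).dualMap α, mul x y) := by

  intro α β x y
  have h1 : ∀ w : h, (p (α, x) (β, y)).1 w
      = ((-(mul x - mul.flip x).dualMap β + (mul.flip y).dualMap α) : Dual ℝ h) w := by
    intro w
    have := hdef (α, x) (β, y) ((0 : Dual ℝ h), w)
    simp only [cotangentForm, cotangentBracket, LinearMap.dualMap_apply,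
      LinearMap.zero_apply, LinearMap.sub_apply, LinearMap.add_apply,
      LinearMap.neg_apply, LinearMap.flip_apply, map_sub] at this ⊢
    linarith
  have h2 : (p (α, x) (β, y)).2 = mul x y := by
    have key : ∀ δ : Dual ℝ h, δ (p (α, x) (β, y)).2 = δ (mul x y) := by
      intro δ
      have := hdef (α, x) (β, y) (δ, (0 : h))
      simp only [cotangentForm, cotangentBracket, LinearMap.dualMap_apply,
        LinearMap.sub_apply, LinearMap.zero_apply, map_zero, map_sub] at this
      linarith
    have hz := (Module.forall_dual_apply_eq_zero_iff ℝ
      ((p (α, x) (β, y)).2 - mul x y)).mp (by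
        intro δ; simp only [map_sub, sub_eq_zero]; exact key δ)
    rwa [sub_eq_zero] at hz
  ext
  · exact h1 _
  · exact h2
end

section
/- Let (h, ·) be a commutative associative algebra, D a derivation of h, and consider the Novikov product x ∗ y = x·D(y). This product ∗ is associative if and only if x·y·D²(z) = 0 for all x, y, z in h. In particular, if D² = 0 then ∗ is Novikov and associative. -/
/-- For a commutative associative algebra `(h, ·)` with derivation `D`,
the Novikov product `x ∗ y = x·D(y)` is associative iff `x·y·D²(z) = 0` for all
`x, y, z`; in particular if `D² = 0` then `∗` is Novikov and associative. -/
theorem snla_stmt_13 (h : Type*) [AddCommGroup h] [Module ℝ h]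
    (mul : h →ₗ[ℝ] h →ₗ[ℝ] h)
    (hcomm : ∀ x y : h, mul x y = mul y x)
    (hassoc : ∀ x y z : h, mul (mul x y) z = mul x (mul y z))
    (D : h →ₗ[ℝ] h)
    (hD : ∀ x y : h, D (mul x y) = mul (D x) y + mul x (D y)) :
    ((∀ x y z : h, mul (mul x (D y)) (D z) = mul x (D (mul y (D z)))) ↔
      (∀ x y z : h, mul (mul x y) (D (D z)) = 0)) ∧
    ((∀ x : h, D (D x) = 0) →
      ((∀ x y z : h, mul (mul x (D y)) (D z) = mul (mul x (D z)) (D y)) ∧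
        (∀ x y z : h, mul (mul x (D y)) (D z) = mul x (D (mul y (D z)))))) := by
  have key : ∀ x y z : h,
      mul x (D (mul y (D z))) = mul (mul x (D y)) (D z) + mul (mul x y) (D (D z)) := by
    intro x y z
    rw [hD, map_add, hassoc, hassoc]
  have iff1 : (∀ x y z : h, mul (mul x (D y)) (D z) = mul x (D (mul y (D z)))) ↔
      (∀ x y z : h, mul (mul x y) (D (D z)) = 0) := by
    constructor
    · intro H x y z
      have := H x y z
      rw [key] at this
      exact add_eq_left.mp this.symm
    · intro H x y z
      rw [key, H, add_zero]
  refine ⟨iff1, fun hD2 => ⟨?_, ?_⟩⟩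
  · intro x y z
    rw [hassoc, hassoc, hcomm (D y) (D z)]
  · exact iff1.mpr (fun x y z => by rw [hD2, map_zero])
end

section
/- Let (g, ω) be a symplectic Novikov Lie algebra and define the connection ∇^ω_x y = (1/3)(ad_x y - ad_x* y), where ad_x* is the ω-adjoint of ad_x. Then its curvature K(x,y) = [∇^ω_x, ∇^ω_y] - ∇^ω_{[x,y]} satisfies K(x,y) = -(2/9) ad_{[x,y]}. In particular K ≡ 0 if and only if g is two-step nilpotent. -/
/-- The symplectic connection `∇^ω_x = (1/3)(ad_x - ad_x*)` of a symplectic Lie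
algebra, where `adstar x` is the symplectic adjoint of `ad_x`. -/
noncomputable def snlaConn {g : Type*} [LieRing g] [LieAlgebra ℝ g]
    (adstar : g → Module.End ℝ g) (x : g) : Module.End ℝ g :=
  (3⁻¹ : ℝ) • (LieAlgebra.ad ℝ g x - adstar x)

/-- The curvature `K(x,y) = [∇_x, ∇_y] - ∇_{[x,y]}` of the symplectic connection. -/
noncomputable def snlaCurv {g : Type*} [LieRing g] [LieAlgebra ℝ g]
    (adstar : g → Module.End ℝ g) (x y : g) : Module.End ℝ g :=
  snlaConn adstar x * snlaConn adstar y - snlaConn adstar y * snlaConn adstar x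
    - snlaConn adstar ⁅x, y⁆

/-- For an SNLA, the curvature of `∇^ω_x = (1/3)(ad_x - ad_x*)`
satisfies `K(x,y) = -(2/9) ad_{[x,y]}`; in particular `K ≡ 0` iff `g` is
two-step nilpotent. -/
theorem snla_stmt_17 (g : Type*) [LieRing g] [LieAlgebra ℝ g]
    (ω : g →ₗ[ℝ] g →ₗ[ℝ] ℝ)
    (hskew : ∀ x y : g, ω x y = - ω y x)
    (hnondeg : ∀ x : g, (∀ y : g, ω x y = 0) → x = 0)
    (hcocycle : ∀ x y z : g, ω ⁅x, y⁆ z + ω ⁅y, z⁆ x + ω ⁅z, x⁆ y = 0)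
    (mul : g →ₗ[ℝ] g →ₗ[ℝ] g)
    (hdef : ∀ x y z : g, ω (mul x y) z = - ω y ⁅x, z⁆)
    (hNov : ∀ x y z : g, mul (mul x y) z = mul (mul x z) y)
    (adstar : g → Module.End ℝ g)
    (hadj : ∀ x y z : g, ω ⁅x, y⁆ z = ω y (adstar x z)) :
    (∀ x y : g, snlaCurv adstar x y = (-(2 / 9) : ℝ) • LieAlgebra.ad ℝ g ⁅x, y⁆) ∧
    ((∀ x y : g, snlaCurv adstar x y = 0) ↔ (∀ x y z : g, ⁅⁅x, y⁆, z⁆ = 0)) := by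
  -- extensionality with respect to ω
  have hext : ∀ a b : g, (∀ w : g, ω a w = ω b w) → a = b := by
    intro a b h
    have h0 : ∀ w : g, ω (a - b) w = 0 := by
      intro w
      simp only [map_sub, LinearMap.sub_apply, h w, sub_self]
    exact sub_eq_zero.mp (hnondeg _ h0)
  -- the symplectic adjoint of ad x is minus left multiplication
  have hstar : ∀ x z : g, adstar x z = - mul x z := by
    intro x z
    apply hext
    intro w
    have h1 := hadj x w z
    have h2 := hskew (adstar x z) w
    have h3 := hskew w (adstar x z)
    have h4 := hdef x z w
    have h5 := hskew z ⁅x, w⁆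
    simp only [map_neg, LinearMap.neg_apply]
    linarith
  -- the bracket is the commutator of the product
  have hcomm : ∀ x y : g, ⁅x, y⁆ = mul x y - mul y x := by
    intro x y
    apply hext
    intro w
    have hc := hcocycle x y w
    have e1 : ω ⁅w, x⁆ y = - ω ⁅x, w⁆ y := by
      rw [← lie_skew x w, map_neg, LinearMap.neg_apply, neg_neg]
    have e2 := hskew x ⁅y, w⁆
    have e3 := hskew y ⁅x, w⁆
    have e4 := hdef x y w
    have e5 := hdef y x w
    have e6 := hskew ⁅y, w⁆ x
    simp only [map_sub, LinearMap.sub_apply]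
    linarith
  -- left multiplication is a representation
  have hhom : ∀ x y z : g, mul ⁅x, y⁆ z = mul x (mul y z) - mul y (mul x z) := by
    intro x y z
    apply hext
    intro w
    have e1 := hdef ⁅x, y⁆ z w
    have e2 := hdef x (mul y z) w
    have e3 := hdef y z ⁅x, w⁆
    have e4 := hdef y (mul x z) w
    have e5 := hdef x z ⁅y, w⁆
    have e6 : ω z ⁅⁅x, y⁆, w⁆ = ω z ⁅x, ⁅y, w⁆⁆ - ω z ⁅y, ⁅x, w⁆⁆ := by
      rw [lie_lie, map_sub]
    simp only [map_sub, LinearMap.sub_apply]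
    linarith
  -- the key ω-symmetry:  ω(x·[y,z], w) = -ω(y·[x,w], z)
  have hstarid : ∀ x y z w : g, ω (mul x ⁅y, z⁆) w = - ω (mul y ⁅x, w⁆) z := by
    intro x y z w
    have e1 := hdef x ⁅y, z⁆ w
    have e2 := hskew ⁅y, z⁆ ⁅x, w⁆
    have e3 := hdef y ⁅x, w⁆ z
    linarith
  -- linearity helpers
  have hmsubl : ∀ a b c : g, mul (a - b) c = mul a c - mul b c := by
    intro a b c; rw [map_sub, LinearMap.sub_apply]
  have hmsubr : ∀ a b c : g, mul a (b - c) = mul a b - mul a c := by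
    intro a b c; rw [map_sub]
  -- the identity x·[y,z] = y·[x,z] - z·[x,y]
  have hA : ∀ x y z : g, mul x ⁅y, z⁆ = mul y ⁅x, z⁆ - mul z ⁅x, y⁆ := by
    intro x y z
    have c1 := hcomm y z
    have c2 := hcomm x z
    have c3 := hcomm x y
    rw [c1, c2, c3, hmsubr, hmsubr, hmsubr]
    -- rewrite the three "reordered" products via the representation property
    have r1 : mul x (mul y z) =
        mul y (mul x z) + (mul (mul x y) z - mul (mul y x) z) := by
      have := hhom x y z
      rw [hcomm x y, hmsubl] at this
      rw [this]; abel
    have r2 : mul x (mul z y) =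
        mul z (mul x y) + (mul (mul x z) y - mul (mul z x) y) := by
      have := hhom x z y
      rw [hcomm x z, hmsubl] at this
      rw [this]; abel
    have r3 : mul y (mul z x) =
        mul z (mul y x) + (mul (mul y z) x - mul (mul z y) x) := by
      have := hhom y z x
      rw [hcomm y z, hmsubl] at this
      rw [this]; abel
    rw [r1, r2, r3, hNov x y z, hNov y x z, hNov z x y]
    abel
  -- crucial vanishing:  x·[y,z] = 0
  have hB : ∀ x y z : g, mul x ⁅y, z⁆ = 0 := by
    intro x y z
    -- F a b c := ω (mul x ⁅a,b⁆) c satisfies F a b c + F a c b = F b c a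
    have key : ∀ a b c : g,
        ω (mul x ⁅a, b⁆) c + ω (mul x ⁅a, c⁆) b = ω (mul x ⁅b, c⁆) a := by
      intro a b c
      have e0 : ω (mul x ⁅a, b⁆) c
          = ω (mul a ⁅x, b⁆) c - ω (mul b ⁅x, a⁆) c := by
        rw [hA x a b, map_sub, LinearMap.sub_apply]
      have e1 := hstarid a x b c   -- ω (a·[x,b]) c = -ω (x·[a,c]) b
      have e2 := hstarid b x a c   -- ω (b·[x,a]) c = -ω (x·[b,c]) a
      linarith
    have anti : ∀ a b c : g, ω (mul x ⁅a, b⁆) c = - ω (mul x ⁅b, a⁆) c := by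
      intro a b c
      rw [← lie_skew b a, map_neg, map_neg, LinearMap.neg_apply, neg_neg]
    have zero : ∀ a b c : g, ω (mul x ⁅a, b⁆) c = 0 := by
      intro a b c
      have k1 := key c a b   -- F c a b + F c b a = F a b c
      have k2 := key c b a   -- F c b a + F c a b = F b a c
      have k3 := anti a b c
      linarith
    exact hnondeg _ (fun w => zero y z w)
  -- left multiplication by a bracket is ad
  have hLbr : ∀ x y z : g, mul ⁅x, y⁆ z = ⁅⁅x, y⁆, z⁆ := by
    intro x y z
    rw [hcomm ⁅x, y⁆ z, hB z x y, sub_zero]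
  -- the connection pointwise
  have hconn : ∀ x z : g, snlaConn adstar x z = (3⁻¹ : ℝ) • (⁅x, z⁆ + mul x z) := by
    intro x z
    simp only [snlaConn, LinearMap.smul_apply, LinearMap.sub_apply,
      LieAlgebra.ad_apply, hstar, sub_neg_eq_add]
  -- the pointwise curvature formula
  have main : ∀ x y z : g,
      snlaCurv adstar x y z = (-(2 / 9) : ℝ) • ⁅⁅x, y⁆, z⁆ := by
    intro x y z
    have expand : ∀ a b w : g, snlaConn adstar a ((3⁻¹ : ℝ) • (⁅b, w⁆ + mul b w))
        = (9⁻¹ : ℝ) • (⁅a, ⁅b, w⁆⁆ + ⁅a, mul b w⁆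
            + (mul a ⁅b, w⁆ + mul a (mul b w))) := by
      intro a b w
      rw [map_smul, hconn a, smul_smul]
      have h9 : ((3 : ℝ)⁻¹ * 3⁻¹) = 9⁻¹ := by norm_num
      rw [h9]
      congr 1
      rw [lie_add, map_add]
    rw [snlaCurv, LinearMap.sub_apply, LinearMap.sub_apply, Module.End.mul_apply,
      Module.End.mul_apply, hconn y z, hconn x z, expand x y z, expand y x z,
      hconn ⁅x, y⁆ z]
    rw [hB x y z, hB y x z, hLbr x y z]
    have j : ⁅y, ⁅x, z⁆⁆ = ⁅x, ⁅y, z⁆⁆ - ⁅⁅x, y⁆, z⁆ := by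
      rw [lie_lie]; abel
    have br1 : ⁅x, mul y z⁆ = mul x (mul y z) - mul (mul y z) x := hcomm _ _
    have br2 : ⁅y, mul x z⁆ = mul y (mul x z) - mul (mul x z) y := hcomm _ _
    rw [j, br1, br2, hNov y z x, hNov x z y]
    have hx : mul x (mul y z) = mul y (mul x z) + ⁅⁅x, y⁆, z⁆ := by
      have := hhom x y z
      rw [hLbr x y z] at this
      rw [this]; abel
    have hxy : mul (mul x y) z = mul (mul y x) z + ⁅⁅x, y⁆, z⁆ := by
      have : mul (mul x y) z - mul (mul y x) z = ⁅⁅x, y⁆, z⁆ := by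
        rw [← hmsubl, ← hcomm, hLbr]
      rw [← this]; abel
    rw [hx, hxy]
    module
  -- operator version
  have main' : ∀ x y : g,
      snlaCurv adstar x y = (-(2 / 9) : ℝ) • LieAlgebra.ad ℝ g ⁅x, y⁆ := by
    intro x y
    ext z
    rw [main x y z]
    simp [LieAlgebra.ad_apply]
  refine ⟨main', ?_, ?_⟩
  · intro h x y z
    have h0 : ((-(2 / 9) : ℝ) • LieAlgebra.ad ℝ g ⁅x, y⁆ : Module.End ℝ g) = 0 :=
      (main' x y).symm.trans (h x y)
    have h1 := LinearMap.congr_fun h0 z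
    simp only [LinearMap.smul_apply, LieAlgebra.ad_apply, LinearMap.zero_apply,
      smul_eq_zero] at h1
    rcases h1 with h1 | h1
    · norm_num at h1
    · exact h1
  · intro h x y
    rw [main' x y]
    have : LieAlgebra.ad ℝ g ⁅x, y⁆ = 0 := by
      ext z; simp only [LieAlgebra.ad_apply, h, LinearMap.zero_apply]
    rw [this, smul_zero]
end
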